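/- Let ν : [0, ∞) → [0, ∞) be continuous, let ε_N > 0 and ν_* > 0, and assume that for every t ≥ 0 with ν(t) > ν_*, the upper right Dini derivative satisfies D⁺ν(t) ≤ −ε_N √(ν(t)). If ν(0) > ν_*, then there exists t_* with 0 ≤ t_* ≤ (2/ε_N)(√(ν(0)) − √(ν_*)) such that ν(t_*) ≤ ν_*. -/

import Mathlib

open Set Filter

noncomputable section

/-- Upper right Dini derivative `D⁺h(t) = limsup_{s→0⁺}(h(t+s) − h(t))/s`, with values
in the extended reals. -/
def diniUR (h : ℝ → ℝ) (t : ℝ) : EReal :=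
  limsup (fun s => (((h (t + s) - h t) / s : ℝ) : EReal)) (nhdsWithin 0 (Ioi 0))

/-- The finite-time reaching estimate of Corollary 1 of the paper: if `D⁺ν ≤ −ε_N √ν`
whenever `ν > ν_*`, the residual level set `{ν ≤ ν_*}` is attained in time at most
`(2/ε_N)(√ν(0) − √ν_*)`. -/
theorem stmt9 (ν : ℝ → ℝ) (hcont : ContinuousOn ν (Ici 0))
    (hnonneg : ∀ t : ℝ, 0 ≤ t → 0 ≤ ν t)
    (εN νstar : ℝ) (hε : 0 < εN) (hstar : 0 < νstar)
    (hdini : ∀ t : ℝ, 0 ≤ t → νstar < ν t →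
      diniUR ν t ≤ ((-εN * Real.sqrt (ν t) : ℝ) : EReal))
    (h0 : νstar < ν 0) :
    ∃ tstar : ℝ, 0 ≤ tstar ∧
      tstar ≤ (2 / εN) * (Real.sqrt (ν 0) - Real.sqrt νstar) ∧
      ν tstar ≤ νstar := by
  set T : ℝ := (2 / εN) * (Real.sqrt (ν 0) - Real.sqrt νstar) with hT
  have hsqrt0 : Real.sqrt νstar < Real.sqrt (ν 0) := Real.sqrt_lt_sqrt hstar.le h0
  have hTpos : 0 ≤ T := by
    apply mul_nonneg (by positivity)
    linarith
  -- Suppose no time in `[0, T]` reaches the level set; derive a contradiction at `T`.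
  by_cases hreach : ∃ t ∈ Icc (0 : ℝ) T, ν t ≤ νstar
  · obtain ⟨t, ht, htle⟩ := hreach
    exact ⟨t, ht.1, ht.2, htle⟩
  push_neg at hreach
  exfalso
  have H : ∀ t ∈ Icc (0 : ℝ) T, νstar < ν t := hreach
  set w : ℝ → ℝ := fun t => Real.sqrt (ν t) with hw
  have hwcont : ContinuousOn w (Icc 0 T) :=
    Real.continuous_sqrt.comp_continuousOn (hcont.mono (Icc_subset_Ici_self))
  set B : ℝ → ℝ := fun t => Real.sqrt (ν 0) - εN / 2 * t with hB
  have hBderiv : ∀ x : ℝ, HasDerivAt B (-(εN / 2)) x := by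
    intro x
    have : HasDerivAt (fun t : ℝ => Real.sqrt (ν 0) - εN / 2 * t)
        (0 - εN / 2 * 1) x :=
      (hasDerivAt_const x _).sub ((hasDerivAt_id x).const_mul (εN / 2))
    simpa using this
  -- Main comparison
  have key : ∀ ⦃x : ℝ⦄, x ∈ Icc 0 T → w x ≤ B x := by
    apply image_le_of_liminf_slope_right_le_deriv_boundary hwcont
    · simp [w, B]
    · exact fun x _ => (hBderiv x).continuousAt.continuousWithinAt
    · exact fun x _ => (hBderiv x).hasDerivWithinAt
    · intro x hx r hr
      have hx0 : 0 ≤ x := hx.1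
      have hνx : νstar < ν x := H x (Ico_subset_Icc_self hx)
      have hsx : 0 < Real.sqrt (ν x) := Real.sqrt_pos.2 (hstar.trans hνx)
      -- choose c' strictly between `-εN √(ν x)` and `2 r √(ν x)`
      have hlt : -εN * Real.sqrt (ν x) < 2 * r * Real.sqrt (ν x) := by
        apply mul_lt_mul_of_pos_right _ hsx
        linarith
      obtain ⟨c, hc1, hc2⟩ := exists_between hlt
      -- from the Dini bound, eventually the difference quotient is `< c`
      have hdq : ∀ᶠ s in nhdsWithin (0 : ℝ) (Ioi 0),
          (ν (x + s) - ν x) / s < c := by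
        have h1 : diniUR ν x < (c : EReal) :=
          lt_of_le_of_lt (hdini x hx0 hνx) (by exact_mod_cast hc1)
        have h2 := Filter.eventually_lt_of_limsup_lt h1
        filter_upwards [h2] with s hs
        exact_mod_cast hs
      -- continuity: `ν (x + s) → ν x` as `s → 0⁺`
      have htend : Tendsto (fun s => ν (x + s)) (nhdsWithin (0 : ℝ) (Ioi 0)) (nhds (ν x)) := by
        have hcx : ContinuousWithinAt ν (Ici 0) x := hcont x (mem_Ici.2 hx0)
        have hmap : Tendsto (fun s : ℝ => x + s) (nhdsWithin (0 : ℝ) (Ioi 0))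
            (nhdsWithin x (Ici 0)) := by
          apply tendsto_nhdsWithin_of_tendsto_nhds_of_eventually_within
          · exact ((continuous_add_left x).tendsto' (0 : ℝ) x (by simp))
              |>.mono_left nhdsWithin_le_nhds
          · filter_upwards [self_mem_nhdsWithin] with s hs
            exact le_trans hx0 (by linarith [mem_Ioi.1 hs])
        exact hcx.tendsto.comp hmap
      -- eventually `c < r * (√ν(x+s) + √ν x)`
      have hD : Tendsto (fun s => r * (Real.sqrt (ν (x + s)) + Real.sqrt (ν x)))
          (nhdsWithin (0 : ℝ) (Ioi 0))
          (nhds (r * (Real.sqrt (ν x) + Real.sqrt (ν x)))) := by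
        have h1 : Tendsto (fun s => Real.sqrt (ν (x + s)))
            (nhdsWithin (0 : ℝ) (Ioi 0)) (nhds (Real.sqrt (ν x))) :=
          (Real.continuous_sqrt.tendsto (ν x)).comp htend
        exact tendsto_const_nhds.mul (h1.add tendsto_const_nhds)
      have hc2' : c < r * (Real.sqrt (ν x) + Real.sqrt (ν x)) := by nlinarith [hc2]
      have hcD : ∀ᶠ s in nhdsWithin (0 : ℝ) (Ioi 0),
          c < r * (Real.sqrt (ν (x + s)) + Real.sqrt (ν x)) :=
        hD.eventually (eventually_gt_nhds hc2')
      -- also eventually `ν (x+s) ≥ 0`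
      have hpos : ∀ᶠ s in nhdsWithin (0 : ℝ) (Ioi 0), 0 ≤ ν (x + s) := by
        filter_upwards [self_mem_nhdsWithin] with s hs
        exact hnonneg _ (le_trans hx0 (by linarith [mem_Ioi.1 hs]))
      -- combine into the slope estimate
      have hev : ∀ᶠ s in nhdsWithin (0 : ℝ) (Ioi 0), slope w x (x + s) < r := by
        filter_upwards [hdq, hcD, hpos, self_mem_nhdsWithin] with s hq hcd hp hs
        have hspos : 0 < s := mem_Ioi.1 hs
        have hDpos : 0 < Real.sqrt (ν (x + s)) + Real.sqrt (ν x) :=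
          lt_of_lt_of_le hsx (le_add_of_nonneg_left (Real.sqrt_nonneg _))
        have hfac : ν (x + s) - ν x =
            (w (x + s) - w x) * (Real.sqrt (ν (x + s)) + Real.sqrt (ν x)) := by
          have h1 : Real.sqrt (ν (x + s)) * Real.sqrt (ν (x + s)) = ν (x + s) :=
            Real.mul_self_sqrt hp
          have h2 : Real.sqrt (ν x) * Real.sqrt (ν x) = ν x :=
            Real.mul_self_sqrt (hnonneg x hx0)
          simp only [w]
          nlinarith [h1, h2]
        have hslope : slope w x (x + s) = (ν (x + s) - ν x) /
            (s * (Real.sqrt (ν (x + s)) + Real.sqrt (ν x))) := by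
          rw [slope_def_field, hfac]
          field_simp
          rw [add_sub_cancel_left, mul_div_cancel_left₀ _ hspos.ne']
        rw [hslope]
        rw [div_lt_iff₀ (by positivity)]
        calc ν (x + s) - ν x < c * s := by
              have := (div_lt_iff₀ hspos).1 hq; linarith
          _ ≤ r * (Real.sqrt (ν (x + s)) + Real.sqrt (ν x)) * s := by
              apply mul_le_mul_of_nonneg_right _ hspos.le
              exact hcd.le
          _ = r * (s * (Real.sqrt (ν (x + s)) + Real.sqrt (ν x))) := by ring
      -- transfer from `𝓝[>] 0` to `𝓝[>] x`
      have hmap2 : Tendsto (fun z : ℝ => z - x) (nhdsWithin x (Ioi x))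
          (nhdsWithin (0 : ℝ) (Ioi 0)) := by
        apply tendsto_nhdsWithin_of_tendsto_nhds_of_eventually_within
        · have h3 : Tendsto (fun z : ℝ => z - x) (nhds x) (nhds (x - x)) :=
            (continuous_id.sub continuous_const).tendsto x
          rw [sub_self] at h3
          exact h3.mono_left nhdsWithin_le_nhds
        · filter_upwards [self_mem_nhdsWithin] with z hz
          exact sub_pos.2 (mem_Ioi.1 hz)
      have : ∀ᶠ z in nhdsWithin x (Ioi x), slope w x z < r := by
        filter_upwards [hmap2.eventually hev] with z hz
        simpa using hz
      exact this.frequently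
  -- evaluate at `T`
  have hwT : w T ≤ B T := key ⟨hTpos, le_refl T⟩
  have hBT : B T = Real.sqrt νstar := by
    simp only [B, hT]
    field_simp
    ring
  have : Real.sqrt (ν T) ≤ Real.sqrt νstar := hBT ▸ hwT
  have hνT : ν T ≤ νstar := (Real.sqrt_le_sqrt_iff hstar.le).1 this
  exact absurd hνT (not_le.2 (H T ⟨hTpos, le_refl T⟩))
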